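/- The expectation of the CertainLogic OR of two opinions satisfies the probabilistic disjunction rule: for all real numbers t_A, c_A, f_A, t_B, c_B, f_B ∈ [0,1] with f_A + f_B − f_A·f_B ≠ 0, if the certainty component c_∨ of the OR of (t_A,c_A,f_A) and (t_B,c_B,f_B) is nonzero, then E(t_∨, c_∨, f_∨) = E(t_A,c_A,f_A) + E(t_B,c_B,f_B) − E(t_A,c_A,f_A)·E(t_B,c_B,f_B), where (t_∨, c_∨, f_∨) denotes the OR of the two opinions and E(t,c,f) = t·c + (1−c)·f. -/

import Mathlib

/-- The CertainTrust expectation `E(t,c,f) = t·c + (1-c)·f`. -/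
def ctE (t c f : ℝ) : ℝ := t * c + (1 - c) * f

/-- The certainty component of the CertainLogic `OR` operator. -/
noncomputable def ctOrC (tA cA fA tB cB fB : ℝ) : ℝ :=
  cA + cB - cA * cB -
    (cA * (1 - cB) * fB * (1 - tA) + (1 - cA) * cB * fA * (1 - tB)) /
      (fA + fB - fA * fB)

/-- The trust-value component of the CertainLogic `OR` operator. -/
noncomputable def ctOrT (tA cA fA tB cB fB : ℝ) : ℝ :=
  if ctOrC tA cA fA tB cB fB ≠ 0 then
    (1 / ctOrC tA cA fA tB cB fB) * (cA * tA + cB * tB - cA * cB * tA * tB)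
  else 0.5

/-- The prior component of the CertainLogic `OR` operator. -/
noncomputable def ctOrF (_tA _cA fA _tB _cB fB : ℝ) : ℝ := fA + fB - fA * fB

/-- The expectation of the CertainLogic `OR` of two opinions satisfies the
probabilistic disjunction rule (when the resulting certainty is nonzero). -/
theorem ctOr_expectation (tA cA fA tB cB fB : ℝ)
    (htA : tA ∈ Set.Icc (0 : ℝ) 1) (hcA : cA ∈ Set.Icc (0 : ℝ) 1)
    (hfA : fA ∈ Set.Icc (0 : ℝ) 1) (htB : tB ∈ Set.Icc (0 : ℝ) 1)
    (hcB : cB ∈ Set.Icc (0 : ℝ) 1) (hfB : fB ∈ Set.Icc (0 : ℝ) 1)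
    (hf : fA + fB - fA * fB ≠ 0) (hc : ctOrC tA cA fA tB cB fB ≠ 0) :
    ctE (ctOrT tA cA fA tB cB fB) (ctOrC tA cA fA tB cB fB)
        (ctOrF tA cA fA tB cB fB) =
      ctE tA cA fA + ctE tB cB fB - ctE tA cA fA * ctE tB cB fB := by
  unfold ctE ctOrT ctOrF
  rw [if_pos hc, one_div, inv_mul_eq_div, div_mul_cancel₀ _ hc]
  unfold ctOrC
  field_simp
  rw [mul_comm fB fA]
  field_simp
  ring
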